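/- Let H ≠ 1 be a finite group and G a finitely generated group, and equip H≀G with the word metric with respect to the generating set (H∖{1}) ∪ S, where S is a finite generating set of G. Let K be the kernel of the projection H≀G → G. For every r > 1, every element of K of word length less than r is a product of bulbs indexed by elements of G of word length less than r. -/

import Mathlib

open Function SemidirectProduct ENNReal

noncomputable section

/-- Word length of `g` with respect to a symmetrized generating set `S`. -/
def wordLength {G : Type*} [Group G] (S : Set G) (g : G) : ℕ :=
  sInf {m | ∃ w : List G, w.length = m ∧ (∀ x ∈ w, x ∈ S ∨ x⁻¹ ∈ S) ∧ w.prod = g}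

/-- The word metric on a group. -/
def wordDist {G : Type*} [Group G] (S : Set G) (g h : G) : ℝ :=
  wordLength S (g⁻¹ * h)

/-- Growth function: the number of elements in the open ball `B(1,r)` of the word metric. -/
def growth {G : Type*} [Group G] (S : Set G) (r : ℝ) : ℕ :=
  Nat.card {g : G | (wordLength S g : ℝ) < r}

/-- `x` and `y` are in the same `r`-component of `A ⊆ X` (distance function `d`):
they are joined by an `r`-path inside `A`. -/
def ChainIn {X : Type*} (d : X → X → ℝ) (A : Set X) (r : ℝ) (x y : X) : Prop :=
  ∃ (m : ℕ) (c : Fin (m + 1) → X), (∀ i, c i ∈ A) ∧ c 0 = x ∧ c (Fin.last m) = y ∧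
    ∀ i : Fin m, d (c i.castSucc) (c i.succ) < r

/-- `D` is an `n`-dimensional control function for the distance function `d` on `X`:
for every `r > 0` there is a cover by `n+1` sets of Lebesgue number at least `r`
whose `r`-components have diameter at most `D r`. -/
def IsControlFunction {X : Type*} (d : X → X → ℝ) (n : ℕ) (D : ℝ → ℝ≥0∞) : Prop :=
  ∀ r : ℝ, 0 < r → ∃ P : Fin (n + 1) → Set X,
    (⋃ i, P i) = Set.univ ∧
    (∀ x : X, ∃ i, {y | d x y < r} ⊆ P i) ∧
    ∀ i, ∀ x ∈ P i, ∀ y ∈ P i, ChainIn d (P i) r x y → ENNReal.ofReal (d x y) ≤ D r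

/-- `dim_AN(X,d) ≤ n`: there is an `n`-dimensional control function which is a dilation. -/
def ANdimLE {X : Type*} (d : X → X → ℝ) (n : ℕ) : Prop :=
  ∃ C : ℝ, 0 < C ∧ IsControlFunction d n fun r => ENNReal.ofReal (C * r)

/-- `f` weakly dominates `g`. -/
def WeaklyDominates (f g : ℝ → ℝ) : Prop :=
  ∃ lam C : ℝ, 1 ≤ lam ∧ 0 ≤ C ∧ ∀ t : ℝ, 0 ≤ t → g t ≤ lam * f (lam * t + C) + C

/-- The base group of the restricted wreath product `H ≀ G`:
finitely supported functions `G → H` under pointwise multiplication. -/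
def WreathBase (H G : Type*) [Group H] [Group G] : Subgroup (G → H) where
  carrier := {f | (Function.mulSupport f).Finite}
  one_mem' := by simp [Function.mulSupport_one]
  mul_mem' {a b} ha hb := ((ha.union hb).subset (Function.mulSupport_mul a b))
  inv_mem' {a} ha := by simpa [Function.mulSupport_inv] using ha

variable (H G : Type*) [Group H] [Group G]

/-- The shift action of `b : G` on the base group, `(b • f) γ = f (b⁻¹ γ)`. -/
def wreathShift (b : G) : WreathBase H G ≃* WreathBase H G where
  toFun f := ⟨fun x => f.1 (b⁻¹ * x), by
    have h : Function.mulSupport (fun x => f.1 (b⁻¹ * x)) ⊆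
        (fun x : G => b⁻¹ * x) ⁻¹' Function.mulSupport f.1 := fun x hx => hx
    exact (f.2.preimage ((mul_right_injective b⁻¹).injOn)).subset h⟩
  invFun f := ⟨fun x => f.1 (b * x), by
    have h : Function.mulSupport (fun x => f.1 (b * x)) ⊆
        (fun x : G => b * x) ⁻¹' Function.mulSupport f.1 := fun x hx => hx
    exact (f.2.preimage ((mul_right_injective b).injOn)).subset h⟩
  left_inv f := by ext x; simp
  right_inv f := by ext x; simp
  map_mul' f g := rfl

/-- The action of `G` on the base group of the wreath product. -/
def wreathAct : G →* MulAut (WreathBase H G) where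
  toFun := wreathShift H G
  map_one' := by
    refine MulEquiv.ext fun f => Subtype.ext (funext fun x => ?_)
    simp [wreathShift]
  map_mul' a b := by
    refine MulEquiv.ext fun f => Subtype.ext (funext fun x => ?_)
    simp [wreathShift, mul_assoc]

/-- The restricted wreath product `H ≀ G`. -/
abbrev Wreath := WreathBase H G ⋊[wreathAct H G] G

/-- The element of the base group supported at `1` with value `a`. -/
def atOne (a : H) : WreathBase H G :=
  letI := Classical.decEq G
  ⟨fun x => if x = 1 then a else 1, Set.Finite.subset (Set.finite_singleton 1) (by
    intro x hx
    simp only [Function.mem_mulSupport] at hx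
    simp only [Set.mem_singleton_iff]
    by_contra h
    exact hx (if_neg h))⟩

/-- The `(g,a)`-bulb `g·a·g⁻¹` in `H ≀ G`. -/
def bulb (g : G) (a : H) : Wreath H G :=
  inr g * inl (atOne H G a) * (inr g)⁻¹

/-- The generating set `(H ∖ {1}) ∪ S` of `H ≀ G`. -/
def wreathGen (S : Set G) : Set (Wreath H G) :=
  {w | ∃ a : H, a ≠ 1 ∧ w = inl (atOne H G a)} ∪ {w | ∃ s ∈ S, w = inr s}

/-- The word metric on `H ≀ G` with respect to the generating set `(H ∖ {1}) ∪ S`. -/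
def wreathDist (S : Set G) (x y : Wreath H G) : ℝ :=
  wordLength (wreathGen H G S) (x⁻¹ * y)

/-- The metric on the kernel `K` of `H ≀ G → G` induced from the word metric on `H ≀ G`. -/
def kerDist (S : Set G) (x y : (rightHom : Wreath H G →* G).ker) : ℝ :=
  wreathDist H G S x.1 y.1



section Aux

lemma atOne_apply_one {H G : Type*} [Group H] [Group G] (a : H) :
    (atOne H G a).1 (1 : G) = a := by
  simp [atOne]

lemma atOne_apply_ne {H G : Type*} [Group H] [Group G] (a : H) {y : G} (hy : y ≠ 1) :
    (atOne H G a).1 y = 1 := by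
  simp [atOne, hy]

lemma atOne_inv {H G : Type*} [Group H] [Group G] (a : H) :
    atOne H G a⁻¹ = (atOne H G a)⁻¹ := by
  refine Subtype.ext (funext fun y => ?_)
  by_cases hy : y = 1
  · subst hy
    show (atOne H G a⁻¹).1 1 = ((atOne H G a).1 1)⁻¹
    rw [atOne_apply_one, atOne_apply_one]
  · show (atOne H G a⁻¹).1 y = ((atOne H G a).1 y)⁻¹
    rw [atOne_apply_ne _ hy, atOne_apply_ne _ hy, inv_one]

lemma atOne_one {H G : Type*} [Group H] [Group G] : atOne H G (1 : H) = 1 := by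
  refine Subtype.ext (funext fun y => ?_)
  by_cases hy : y = 1
  · subst hy; exact atOne_apply_one 1
  · exact atOne_apply_ne 1 hy

lemma bulb_eq_inl {H G : Type*} [Group H] [Group G] (g : G) (a : H) :
    bulb H G g a = inl (wreathAct H G g (atOne H G a)) := by
  rw [bulb, ← map_inv, ← inl_aut]

lemma bulb_conj {H G : Type*} [Group H] [Group G] (t g : G) (a : H) :
    bulb H G (t * g) a = inr t * bulb H G g a * (inr t : Wreath H G)⁻¹ := by
  simp only [bulb, map_mul, mul_inv_rev, map_inv, mul_assoc]

lemma conj_list_prod {M : Type*} [Group M] (u : M) (l : List M) :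
    u * l.prod * u⁻¹ = (l.map fun z => u * z * u⁻¹).prod := by
  induction l with
  | nil => simp
  | cons h t ih =>
    rw [List.map_cons, List.prod_cons, List.prod_cons, ← ih]
    group

/-- Key decomposition lemma: any word in the generators equals a product of bulbs times
an `inr` factor, with explicit short words for the bulb indices. -/
lemma key_lemma {H G : Type*} [Group H] [Group G] (S : Set G) :
    ∀ w : List (Wreath H G),
    (∀ l ∈ w, (∃ a : H, a ≠ 1 ∧ l = inl (atOne H G a)) ∨
      (∃ t : G, (t ∈ S ∨ t⁻¹ ∈ S) ∧ l = inr t)) →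
    ∃ L : List (G × H), (∀ p ∈ L, p.2 ≠ 1) ∧
      (∀ p ∈ L, ∃ v : List G, (∀ z ∈ v, z ∈ S ∨ z⁻¹ ∈ S) ∧ v.prod = p.1 ∧
        v.length < w.length) ∧
      w.prod = (L.map fun p => bulb H G p.1 p.2).prod * inr (rightHom w.prod) := by
  intro w
  induction w with
  | nil => intro _; exact ⟨[], by simp, by simp, by simp⟩
  | cons l w ih =>
    intro hw
    obtain ⟨L, h1, h2, h3⟩ := ih fun z hz => hw z (List.mem_cons_of_mem _ hz)
    rcases hw l (List.mem_cons_self) with ⟨a, ha, rfl⟩ | ⟨t, ht, rfl⟩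
    · refine ⟨(1, a) :: L, ?_, ?_, ?_⟩
      · intro p hp
        rcases List.mem_cons.mp hp with rfl | hp
        · exact ha
        · exact h1 p hp
      · intro p hp
        rcases List.mem_cons.mp hp with rfl | hp
        · exact ⟨[], by simp, by simp, by simp⟩
        · obtain ⟨v, hv1, hv2, hv3⟩ := h2 p hp
          exact ⟨v, hv1, hv2, hv3.trans (by simp)⟩
      · have hb : bulb H G (1 : G) a = inl (atOne H G a) := by
          simp [bulb]
        have hr : rightHom ((inl (atOne H G a) :: w).prod) = rightHom w.prod := by
          rw [List.prod_cons, map_mul, rightHom_inl, one_mul]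
        rw [hr, List.prod_cons, List.map_cons, List.prod_cons, hb, mul_assoc, ← h3]
    · refine ⟨L.map fun p => (t * p.1, p.2), ?_, ?_, ?_⟩
      · intro p hp
        obtain ⟨q, hq, rfl⟩ := List.mem_map.mp hp
        exact h1 q hq
      · intro p hp
        obtain ⟨q, hq, rfl⟩ := List.mem_map.mp hp
        obtain ⟨v, hv1, hv2, hv3⟩ := h2 q hq
        refine ⟨t :: v, ?_, ?_, ?_⟩
        · intro z hz
          rcases List.mem_cons.mp hz with rfl | hz
          · exact ht
          · exact hv1 z hz
        · rw [List.prod_cons, hv2]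
        · simpa using hv3
      · have hr : rightHom ((inr t :: w).prod) = t * rightHom w.prod := by
          rw [List.prod_cons, map_mul, rightHom_inr]
        have hmap : ((L.map fun p : G × H => ((t * p.1 : G), p.2)).map
            fun p => bulb H G p.1 p.2).prod
            = inr t * (L.map fun p => bulb H G p.1 p.2).prod * (inr t : Wreath H G)⁻¹ := by
          rw [conj_list_prod, List.map_map, List.map_map]
          refine congrArg List.prod (List.map_congr_left fun p _ => ?_)
          simpa [Function.comp] using bulb_conj (H := H) t p.1 p.2
        calc (inr t :: w).prod = inr t * w.prod := List.prod_cons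
          _ = inr t * ((L.map fun p => bulb H G p.1 p.2).prod * inr (rightHom w.prod)) :=
              congrArg (fun z => inr t * z) h3
          _ = (inr t * (L.map fun p => bulb H G p.1 p.2).prod * (inr t : Wreath H G)⁻¹) *
              inr (t * rightHom w.prod) := by rw [map_mul]; group
          _ = _ := by rw [hmap, hr]

lemma inr_mem_closure {H G : Type*} [Group H] [Group G] (S : Set G)
    (hSgen : Subgroup.closure S = ⊤) (g : G) :
    (inr g : Wreath H G) ∈ Subgroup.closure (wreathGen H G S) := by
  have h1 : (inr g : Wreath H G) ∈ (Subgroup.closure S).map (inr : G →* Wreath H G) :=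
    ⟨g, by rw [hSgen]; trivial, rfl⟩
  rw [MonoidHom.map_closure] at h1
  refine Subgroup.closure_mono ?_ h1
  rintro _ ⟨s, hs, rfl⟩
  exact Or.inr ⟨s, hs, rfl⟩

lemma inl_mem_closure {H G : Type*} [Group H] [Group G] (S : Set G)
    (hSgen : Subgroup.closure S = ⊤) (f : WreathBase H G) :
    (inl f : Wreath H G) ∈ Subgroup.closure (wreathGen H G S) := by
  classical
  have hatOne : ∀ a : H, (inl (atOne H G a) : Wreath H G) ∈
      Subgroup.closure (wreathGen H G S) := by
    intro a
    by_cases ha : a = 1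
    · rw [ha, atOne_one, map_one]; exact one_mem _
    · exact Subgroup.subset_closure (Or.inl ⟨a, ha, rfl⟩)
  have hbulb : ∀ (g : G) (a : H), bulb H G g a ∈ Subgroup.closure (wreathGen H G S) :=
    fun g a => mul_mem (mul_mem (inr_mem_closure S hSgen g) (hatOne a))
      (inv_mem (inr_mem_closure S hSgen g))
  suffices h : ∀ (n : ℕ) (f : WreathBase H G), f.2.toFinset.card ≤ n →
      (inl f : Wreath H G) ∈ Subgroup.closure (wreathGen H G S) from h _ f le_rfl
  intro n
  induction n with
  | zero =>
    intro f hf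
    have h0 : f.2.toFinset = ∅ := Finset.card_eq_zero.mp (Nat.le_zero.mp hf)
    have h1 : Function.mulSupport f.1 = ∅ := by
      rw [← Set.Finite.coe_toFinset f.2, h0]; simp
    have hf1 : f = 1 := Subtype.ext (Function.mulSupport_eq_empty_iff.mp h1)
    rw [hf1, map_one]
    exact one_mem _
  | succ n ih =>
    intro f hf
    by_cases h0 : Function.mulSupport f.1 = ∅
    · have hf1 : f = 1 := Subtype.ext (Function.mulSupport_eq_empty_iff.mp h0)
      rw [hf1, map_one]
      exact one_mem _
    · obtain ⟨γ, hγ⟩ := Set.nonempty_iff_ne_empty.mpr h0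
      set d : WreathBase H G := wreathAct H G γ (atOne H G (f.1 γ)) with hd
      have hdapp : ∀ x : G, d.1 x = (atOne H G (f.1 γ)).1 (γ⁻¹ * x) := fun x => rfl
      set f' : WreathBase H G := d⁻¹ * f with hf'
      have hf'app : ∀ x : G, f'.1 x = (d.1 x)⁻¹ * f.1 x := fun x => rfl
      have hdγ : d.1 γ = f.1 γ := by
        rw [hdapp, inv_mul_cancel, atOne_apply_one]
      have hsub : Function.mulSupport f'.1 ⊆ Function.mulSupport f.1 \ {γ} := by
        intro x hx
        have hx' : f'.1 x ≠ 1 := hx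
        by_cases hxγ : x = γ
        · exfalso
          apply hx'
          rw [hxγ, hf'app, hdγ, inv_mul_cancel]
        · have hne : γ⁻¹ * x ≠ 1 := by
            intro h
            exact hxγ (by rw [← one_mul x, ← mul_inv_cancel γ, mul_assoc, h, mul_one])
          have hdx : d.1 x = 1 := by rw [hdapp, atOne_apply_ne _ hne]
          refine ⟨?_, hxγ⟩
          intro hfx
          exact hx' (by rw [hf'app, hdx, hfx, inv_one, one_mul])
      have hγmem : γ ∈ f.2.toFinset := (Set.Finite.mem_toFinset _).mpr hγ
      have hcard : f'.2.toFinset.card ≤ n := by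
        have hss : f'.2.toFinset ⊆ f.2.toFinset.erase γ := by
          intro x hx
          have hx' := (Set.Finite.mem_toFinset _).mp hx
          obtain ⟨hx1, hx2⟩ := hsub hx'
          exact Finset.mem_erase.mpr ⟨hx2, (Set.Finite.mem_toFinset _).mpr hx1⟩
        have := Finset.card_le_card hss
        rw [Finset.card_erase_of_mem hγmem] at this
        omega
      have hfd : f = d * f' := by rw [hf']; group
      rw [hfd, map_mul]
      exact mul_mem (by rw [hd, ← bulb_eq_inl]; exact hbulb γ (f.1 γ)) (ih f' hcard)

end Aux

/-- In `H ≀ G` (`H ≠ 1` finite, `G` finitely generated) with the word metric of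
the generating set `(H ∖ {1}) ∪ S`, any element of the kernel `K` of `H ≀ G → G` of word length
less than `r > 1` is a product of bulbs indexed by elements of `G` of word length less than `r`. -/
theorem statement_5 {H G : Type*} [Group H] [Finite H] [Nontrivial H] [Group G]
    (S : Set G) (hSfin : S.Finite) (hSgen : Subgroup.closure S = ⊤)
    (r : ℝ) (hr : 1 < r)
    (x : Wreath H G) (hx : x ∈ (rightHom : Wreath H G →* G).ker)
    (hlen : (wordLength (wreathGen H G S) x : ℝ) < r) :
    ∃ (m : ℕ) (gs : Fin m → G) (as : Fin m → H),
      (∀ i, as i ≠ 1) ∧ (∀ i, (wordLength S (gs i) : ℝ) < r) ∧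
      x = (List.ofFn fun i => bulb H G (gs i) (as i)).prod := by
  classical
  have htop : Subgroup.closure (wreathGen H G S) = ⊤ := by
    rw [eq_top_iff]
    rintro y -
    rw [← inl_left_mul_inr_right y]
    exact mul_mem (inl_mem_closure S hSgen y.left) (inr_mem_closure S hSgen y.right)
  have hx1 : x ∈ Submonoid.closure (wreathGen H G S ∪ (wreathGen H G S)⁻¹) := by
    rw [← Subgroup.closure_toSubmonoid]
    show x ∈ Subgroup.closure (wreathGen H G S)
    rw [htop]; trivial
  obtain ⟨w, hw1, hw2⟩ := Submonoid.exists_list_of_mem_closure hx1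
  have hne : {m | ∃ w : List (Wreath H G), w.length = m ∧
      (∀ z ∈ w, z ∈ wreathGen H G S ∨ z⁻¹ ∈ wreathGen H G S) ∧ w.prod = x}.Nonempty := by
    refine ⟨w.length, w, rfl, fun z hz => ?_, hw2⟩
    rcases (Set.mem_union _ _ _).mp (hw1 z hz) with h | h
    · exact Or.inl h
    · exact Or.inr (Set.mem_inv.mp h)
  obtain ⟨w₀, hw₀len, hw₀gen, hw₀prod⟩ := Nat.sInf_mem hne
  have hlet : ∀ l ∈ w₀, (∃ a : H, a ≠ 1 ∧ l = inl (atOne H G a)) ∨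
      (∃ t : G, (t ∈ S ∨ t⁻¹ ∈ S) ∧ l = inr t) := by
    intro l hl
    rcases hw₀gen l hl with h | h
    · rcases (Set.mem_union _ _ _).mp h with ⟨a, ha, rfl⟩ | ⟨s, hs, rfl⟩
      · exact Or.inl ⟨a, ha, rfl⟩
      · exact Or.inr ⟨s, Or.inl hs, rfl⟩
    · rcases (Set.mem_union _ _ _).mp h with ⟨a, ha, heq⟩ | ⟨s, hs, heq⟩
      · refine Or.inl ⟨a⁻¹, inv_ne_one.mpr ha, ?_⟩
        rw [atOne_inv, map_inv, ← heq, inv_inv]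
      · refine Or.inr ⟨s⁻¹, Or.inr (by rw [inv_inv]; exact hs), ?_⟩
        rw [map_inv, ← heq, inv_inv]
  obtain ⟨L, h1, h2, h3⟩ := key_lemma S w₀ hlet
  · rw [MonoidHom.mem_ker] at hx
    have hx0 : rightHom w₀.prod = 1 := by rw [hw₀prod]; exact hx
    have hx3 : x = (L.map fun p => bulb H G p.1 p.2).prod := by
      rw [← hw₀prod, h3, hx0, map_one, mul_one]
    refine ⟨L.length, fun i => (L.get i).1, fun i => (L.get i).2, ?_, ?_, ?_⟩
    · intro i
      exact h1 _ (List.get_mem L i)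
    · intro i
      obtain ⟨v, hv1, hv2, hv3⟩ := h2 _ (List.get_mem L i)
      have hle : wordLength S (L.get i).1 ≤ v.length := Nat.sInf_le ⟨v, rfl, hv1, hv2⟩
      have hlt : (w₀.length : ℝ) < r := by
        rw [hw₀len]
        exact hlen
      calc (wordLength S (L.get i).1 : ℝ) ≤ v.length := by exact_mod_cast hle
        _ < w₀.length := by exact_mod_cast hv3
        _ < r := hlt
    · rw [hx3]
      congr 1
      exact (List.ofFn_getElem_eq_map L fun p => bulb H G p.1 p.2).symm


end
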